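/- Let 0 < θ < 1 and C > 0. Suppose nonnegative numbers P(x⃗, y⃗) indexed by pairs of k-tuples of integers satisfy the one-step bound P₁(y⃗, x⃗) ≤ C ∏_{i=1}^k θ^{|y_i - x_i|} and the (t-s)-step quantity P_{t,s}(y⃗, x⃗) is bounded by the sum over all nonincreasing coordinate trajectories of products of one-step bounds, where each coordinate can only decrease at each step. Then P_{t,s}(y⃗, x⃗) ≤ C' ∏_{i=1}^k binom(|x_i - y_i| + t - s, t - s) θ^{|y_i - x_i|}, where binom is the binomial coefficient counting the number of monotone lattice paths from y_i to x_i in t-s steps. -/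

import Mathlib

private lemma sum_choose_aux (n : ℕ) : ∀ D : ℕ,
    ∑ d ∈ Finset.range (D + 1), Nat.choose (d + n) n = Nat.choose (D + n + 1) (n + 1) := by
  intro D
  induction D with
  | zero => simp
  | succ D ih =>
    rw [Finset.sum_range_succ, ih]
    have h1 : D + 1 + n = D + n + 1 := by omega
    rw [h1, Nat.choose_succ_succ (D + n + 1) n]
    exact Nat.add_comm _ _

private lemma icc_sum_choose (n : ℕ) (a b : ℤ) :
    ∑ w ∈ Finset.Icc a b, (Nat.choose ((w - a).natAbs + n) n : ℝ)
      ≤ (Nat.choose ((b - a).natAbs + n + 1) (n + 1) : ℝ) := by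
  by_cases hab : a ≤ b
  · have himg : Finset.Icc a b
        = (Finset.range ((b - a).toNat + 1)).image (fun d : ℕ => a + (d : ℤ)) := by
      ext z
      simp only [Finset.mem_Icc, Finset.mem_image, Finset.mem_range]
      constructor
      · intro ⟨h1, h2⟩
        exact ⟨(z - a).toNat, by omega, by omega⟩
      · rintro ⟨d, hd, rfl⟩
        omega
    rw [himg, Finset.sum_image (by intro d _ e _ h; have h' : a + (d : ℤ) = a + (e : ℤ) := h; omega)]
    have : ∀ d ∈ Finset.range ((b - a).toNat + 1),
        (Nat.choose ((a + (d : ℤ) - a).natAbs + n) n : ℝ)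
          = (Nat.choose (d + n) n : ℝ) := by
      intro d _
      congr 2
      omega
    rw [Finset.sum_congr rfl this]
    rw [← Nat.cast_sum]
    rw [sum_choose_aux n ((b - a).toNat)]
    have : (b - a).toNat = (b - a).natAbs := by omega
    rw [this]
  · rw [Finset.Icc_eq_empty hab]
    simp [Nat.cast_nonneg]

theorem multiStep_transition_bound (k : ℕ) (hk : 1 ≤ k) (θ C : ℝ)
    (hθ0 : 0 < θ) (hθ1 : θ < 1) (hC : 0 < C)
    (P : ℕ → (Fin k → ℤ) → (Fin k → ℤ) → ℝ)
    (hnonneg : ∀ y x, 0 ≤ P 1 y x)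
    (hone : ∀ y x, P 1 y x ≤ C * ∏ i, θ ^ (y i - x i).natAbs)
    (hsupp : ∀ y x : Fin k → ℤ, ¬(∀ i, x i ≤ y i) → P 1 y x = 0)
    (hbase : ∀ y x : Fin k → ℤ, P 0 y x = if x = y then 1 else 0)
    (hrec : ∀ n : ℕ, ∀ y x : Fin k → ℤ,
      P (n + 1) y x = ∑ w ∈ Finset.Icc x y, P 1 y w * P n w x) :
    ∀ n : ℕ, 1 ≤ n → ∃ C' > (0 : ℝ), ∀ y x : Fin k → ℤ,
      P n y x ≤ C' * ∏ i, ((Nat.choose ((x i - y i).natAbs + n) n : ℝ)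
        * θ ^ (y i - x i).natAbs) := by
  -- nonnegativity of all kernels
  have hPnn : ∀ n : ℕ, ∀ y x : Fin k → ℤ, 0 ≤ P n y x := by
    intro n
    induction n with
    | zero => intro y x; rw [hbase]; split <;> norm_num
    | succ n ih =>
      intro y x
      rw [hrec]
      exact Finset.sum_nonneg fun w _ => mul_nonneg (hnonneg y w) (ih w x)
  -- main induction
  have key : ∀ n : ℕ, ∀ y x : Fin k → ℤ,
      P (n + 1) y x ≤ C ^ (n + 1) * ∏ i, ((Nat.choose ((x i - y i).natAbs + (n + 1)) (n + 1) : ℝ)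
        * θ ^ (y i - x i).natAbs) := by
    intro n
    induction n with
    | zero =>
      intro y x
      refine le_trans (hone y x) ?_
      rw [pow_one]
      refine mul_le_mul_of_nonneg_left ?_ (le_of_lt hC)
      refine Finset.prod_le_prod (fun i _ => by positivity) (fun i _ => ?_)
      have h1 : (1 : ℝ) ≤ (Nat.choose ((x i - y i).natAbs + 1) 1 : ℝ) := by
        rw [Nat.choose_one_right]
        exact_mod_cast Nat.le_add_left 1 _
      nlinarith [pow_pos hθ0 ((y i - x i).natAbs)]
    | succ n ih =>
      intro y x
      rw [hrec (n + 1) y x]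
      -- bound each summand
      have hterm : ∀ w ∈ Finset.Icc x y,
          P 1 y w * P (n + 1) w x ≤
            C ^ (n + 2) * (∏ i, θ ^ (y i - x i).natAbs)
              * ∏ i, (Nat.choose ((x i - w i).natAbs + (n + 1)) (n + 1) : ℝ) := by
        intro w hw
        rw [Finset.mem_Icc] at hw
        obtain ⟨hxw, hwy⟩ := hw
        have hB1 : (0 : ℝ) ≤ C * ∏ i, θ ^ (y i - w i).natAbs := by positivity
        have h := mul_le_mul (hone y w) (ih w x) (hPnn (n + 1) w x) hB1
        refine le_trans h (le_of_eq ?_)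
        have hAB : (∏ i, θ ^ (y i - w i).natAbs)
            * (∏ i, ((Nat.choose ((x i - w i).natAbs + (n + 1)) (n + 1) : ℝ)
                * θ ^ (w i - x i).natAbs))
          = (∏ i, θ ^ (y i - x i).natAbs)
            * ∏ i, (Nat.choose ((x i - w i).natAbs + (n + 1)) (n + 1) : ℝ) := by
          rw [← Finset.prod_mul_distrib, ← Finset.prod_mul_distrib]
          refine Finset.prod_congr rfl fun i _ => ?_
          have habs : (y i - w i).natAbs + (w i - x i).natAbs = (y i - x i).natAbs := by
            have h1 : x i ≤ w i := hxw i; have h2 : w i ≤ y i := hwy i; omega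
          rw [show θ ^ (y i - w i).natAbs
                * ((Nat.choose ((x i - w i).natAbs + (n + 1)) (n + 1) : ℝ)
                  * θ ^ (w i - x i).natAbs)
              = θ ^ (y i - w i).natAbs * θ ^ (w i - x i).natAbs
                * (Nat.choose ((x i - w i).natAbs + (n + 1)) (n + 1) : ℝ) from by ring,
            ← pow_add, habs]
        set A := ∏ i, θ ^ (y i - w i).natAbs with hA
        set B := ∏ i, ((Nat.choose ((x i - w i).natAbs + (n + 1)) (n + 1) : ℝ)
          * θ ^ (w i - x i).natAbs) with hB
        rw [show C * A * (C ^ (n + 1) * B) = C ^ (n + 2) * (A * B) from by ring, hAB]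
        ring
      refine le_trans (Finset.sum_le_sum hterm) ?_
      rw [← Finset.mul_sum]
      rw [mul_assoc]
      rw [show (n + 1 + 1) = (n + 2) from rfl]
      refine mul_le_mul_of_nonneg_left ?_ (by positivity)
      -- factor the sum over the box into a product of 1-d sums
      rw [Pi.Icc_eq]
      have hfact : ∑ w ∈ Fintype.piFinset (fun i => Finset.Icc (x i) (y i)),
          ∏ i, (Nat.choose ((x i - w i).natAbs + (n + 1)) (n + 1) : ℝ)
        = ∏ i, ∑ c ∈ Finset.Icc (x i) (y i),
            (Nat.choose ((x i - c).natAbs + (n + 1)) (n + 1) : ℝ) :=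
        (Finset.prod_univ_sum (fun i => Finset.Icc (x i) (y i))
          (fun i c => (Nat.choose ((x i - c).natAbs + (n + 1)) (n + 1) : ℝ))).symm
      rw [hfact]
      rw [mul_comm]
      rw [show (∏ i, ((Nat.choose ((x i - y i).natAbs + (n + 2)) (n + 2) : ℝ)
            * θ ^ (y i - x i).natAbs))
          = (∏ i, (Nat.choose ((x i - y i).natAbs + (n + 2)) (n + 2) : ℝ))
            * ∏ i, θ ^ (y i - x i).natAbs from (Finset.prod_mul_distrib)]
      refine mul_le_mul_of_nonneg_right ?_ (by positivity)
      refine Finset.prod_le_prod (fun i _ => Finset.sum_nonneg fun j _ => by positivity)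
        (fun i _ => ?_)
      have h := icc_sum_choose (n + 1) (x i) (y i)
      have heq : ∀ w ∈ Finset.Icc (x i) (y i),
          (Nat.choose ((x i - w).natAbs + (n + 1)) (n + 1) : ℝ)
            = (Nat.choose ((w - x i).natAbs + (n + 1)) (n + 1) : ℝ) := by
        intro w _; congr 2; omega
      rw [Finset.sum_congr rfl heq]
      refine le_trans h (le_of_eq ?_)
      congr 2
      omega
  intro n hn
  obtain ⟨m, rfl⟩ := Nat.exists_eq_add_of_le hn
  refine ⟨C ^ (1 + m), pow_pos hC _, fun y x => ?_⟩
  have := key m y x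
  rwa [show m + 1 = 1 + m from by omega] at this
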